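/- The minimum radiated power needed to sustain a given rate is convex and strictly increasing: fix a nonzero complex channel matrix H ∈ ℂ^{m×n} and W > 0, and for R ≥ 0 define P_min(R) := inf{ Re(Tr Q) : Q ∈ ℂ^{n×n} positive semidefinite, R ≤ W·log₂ Re(det(I + H Q Hᴴ)) }. Then P_min(0) = 0, P_min is convex on [0,∞), and P_min is strictly increasing on [0,∞). -/

import Mathlib

open Matrix Finset
open scoped ComplexOrder

/-- Minimum radiated power needed to sustain rate `R` over the channel `H` with
bandwidth `W`. -/
noncomputable def Pmin {m n : ℕ} (H : Matrix (Fin m) (Fin n) ℂ) (W : ℝ) (R : ℝ) : ℝ :=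
  sInf { P : ℝ | ∃ Q : Matrix (Fin n) (Fin n) ℂ, Q.PosSemidef ∧
    R ≤ W * Real.logb 2 (((1 : Matrix (Fin m) (Fin m) ℂ) + H * Q * Hᴴ).det.re) ∧
    P = (Matrix.trace Q).re }

namespace PminAux

open scoped MatrixOrder

variable {ι κ : Type*} [Fintype ι] [Fintype κ]

lemma trace_mul_conjTranspose_re (B : Matrix ι κ ℂ) :
    (Matrix.trace (B * Bᴴ)).re = ∑ i, ∑ j, Complex.normSq (B i j) := by
  simp only [Matrix.trace, Matrix.diag_apply, Matrix.mul_apply, Matrix.conjTranspose_apply,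
    Complex.mul_conj]
  rw [Complex.re_sum]
  refine Finset.sum_congr rfl fun i _ => ?_
  rw [Complex.re_sum]
  simp [Complex.normSq_apply]

lemma normSq_sum_mul_le (f g : κ → ℂ) :
    Complex.normSq (∑ k, f k * g k) ≤ (∑ k, Complex.normSq (f k)) * (∑ k, Complex.normSq (g k)) := by
  have h1 : ‖∑ k, f k * g k‖ ≤ ∑ k, ‖f k‖ * ‖g k‖ := by
    calc ‖∑ k, f k * g k‖ ≤ ∑ k, ‖f k * g k‖ :=
          norm_sum_le (E := ℂ) Finset.univ (fun k => f k * g k)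
      _ = _ := by simp [norm_mul]
  have h2 := Finset.sum_mul_sq_le_sq_mul_sq Finset.univ (fun k => ‖f k‖)
      (fun k => ‖g k‖)
  calc Complex.normSq (∑ k, f k * g k)
      = ‖∑ k, f k * g k‖ ^ 2 := (Complex.sq_norm _).symm
    _ ≤ (∑ k, ‖f k‖ * ‖g k‖) ^ 2 := by
        apply pow_le_pow_left₀ (norm_nonneg _) h1
    _ ≤ (∑ k, ‖f k‖ ^ 2) * (∑ k, ‖g k‖ ^ 2) := h2
    _ = _ := by simp [Complex.sq_norm]


variable {k : Type*} [Fintype k] [DecidableEq k]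

lemma det_real_combo {M : Matrix k k ℂ} (hM : M.IsHermitian) (a b : ℝ) :
    ((a : ℂ) • 1 + (b : ℂ) • M).det = ((∏ i, (a + b * hM.eigenvalues i) : ℝ) : ℂ) := by
  set U : Matrix k k ℂ := (Matrix.IsHermitian.eigenvectorUnitary hM : Matrix k k ℂ) with hUdef
  have hU : U * star U = 1 :=
    Matrix.mem_unitaryGroup_iff.mp (Matrix.IsHermitian.eigenvectorUnitary hM).2
  set D : Matrix k k ℂ := Matrix.diagonal (RCLike.ofReal ∘ hM.eigenvalues) with hDdef
  have key : (a : ℂ) • 1 + (b : ℂ) • M = U * ((a : ℂ) • 1 + (b : ℂ) • D) * star U := by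
    rw [Matrix.mul_add, Matrix.add_mul, Matrix.mul_smul, Matrix.smul_mul,
      Matrix.mul_smul, Matrix.smul_mul, Matrix.mul_one, hU, hM.spectral_theorem,
      Unitary.conjStarAlgAut_apply]
  rw [key, Matrix.det_mul, Matrix.det_mul]
  have hdet1 : U.det * (star U).det = 1 := by rw [← Matrix.det_mul, hU, Matrix.det_one]
  rw [mul_right_comm, hdet1, one_mul]
  have hdiag : (a : ℂ) • (1 : Matrix k k ℂ) + (b : ℂ) • D
      = Matrix.diagonal (fun i => (a : ℂ) + (b : ℂ) * (hM.eigenvalues i : ℝ)) := by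
    ext i j
    by_cases h : i = j <;>
      simp [hDdef, Matrix.one_apply, Matrix.diagonal_apply, h]
  rw [hdiag, Matrix.det_diagonal]
  push_cast
  rfl

lemma trace_hermitian {M : Matrix k k ℂ} (hM : M.IsHermitian) :
    M.trace = ((∑ i, hM.eigenvalues i : ℝ) : ℂ) := by
  conv_lhs => rw [hM.spectral_theorem]
  rw [Unitary.conjStarAlgAut_apply]
  rw [Matrix.trace_mul_cycle]
  have hU : star (Matrix.IsHermitian.eigenvectorUnitary hM : Matrix k k ℂ) *
      (Matrix.IsHermitian.eigenvectorUnitary hM : Matrix k k ℂ) = 1 :=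
    Matrix.mem_unitaryGroup_iff'.mp (Matrix.IsHermitian.eigenvectorUnitary hM).2
  rw [hU, Matrix.one_mul, Matrix.trace_diagonal]
  push_cast
  rfl

lemma det_eq_cast {M : Matrix k k ℂ} (hM : M.IsHermitian) :
    M.det = ((∏ i, hM.eigenvalues i : ℝ) : ℂ) := by
  have := det_real_combo hM 0 1
  simpa using this


lemma logdet_concave {k : Type*} [Fintype k] [DecidableEq k] {A B : Matrix k k ℂ}
    (hA : A.PosDef) (hB : B.PosDef) {a b : ℝ} (ha : 0 ≤ a) (hb : 0 ≤ b) (hab : a + b = 1) :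
    A.det.re ^ a * B.det.re ^ b ≤ ((a : ℂ) • A + (b : ℂ) • B).det.re := by
  classical
  set S := CFC.sqrt A with hSdef
  have hS : S.PosSemidef := (CFC.sqrt_nonneg A).posSemidef
  have hSH : Sᴴ = S := hS.isHermitian
  have hSS : S * S = A := CFC.sqrt_mul_sqrt_self A hA.posSemidef.nonneg
  have hdetS : S.det * S.det = A.det := by rw [← Matrix.det_mul, hSS]
  have hdetA : A.det ≠ 0 := hA.det_pos.ne'
  have hSdet : S.det ≠ 0 := fun h => hdetA (by rw [← hdetS, h, zero_mul])
  have hSunit : IsUnit S.det := isUnit_iff_ne_zero.mpr hSdet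
  have hSinv : S * S⁻¹ = 1 := Matrix.mul_nonsing_inv _ hSunit
  have hSinv' : S⁻¹ * S = 1 := Matrix.nonsing_inv_mul _ hSunit
  set M := S⁻¹ * B * S⁻¹ with hMdef
  have hMps : M.PosSemidef := by
    have h := hB.posSemidef.mul_mul_conjTranspose_same S⁻¹
    rwa [Matrix.conjTranspose_nonsing_inv, hSH] at h
  have hSMS : S * M * S = B := by
    rw [hMdef, ← Matrix.mul_assoc, ← Matrix.mul_assoc, hSinv, Matrix.one_mul,
      Matrix.mul_assoc, hSinv', Matrix.mul_one]
  have key : (a : ℂ) • A + (b : ℂ) • B = S * ((a : ℂ) • 1 + (b : ℂ) • M) * S := by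
    rw [Matrix.mul_add, Matrix.add_mul, Matrix.mul_smul, Matrix.smul_mul,
      Matrix.mul_smul, Matrix.smul_mul, Matrix.mul_one, hSS, hSMS]
  -- determinants
  have hdetmix : ((a : ℂ) • A + (b : ℂ) • B).det
      = A.det * ((∏ i, (a + b * hMps.isHermitian.eigenvalues i) : ℝ) : ℂ) := by
    rw [key, Matrix.det_mul, Matrix.det_mul, mul_right_comm, hdetS,
      det_real_combo hMps.isHermitian a b]
  have hdetB : B.det = A.det * ((∏ i, hMps.isHermitian.eigenvalues i : ℝ) : ℂ) := by
    rw [← hSMS, Matrix.det_mul, Matrix.det_mul, mul_right_comm, hdetS,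
      det_eq_cast hMps.isHermitian]
  have hre : A.det.re = ∏ i, hA.isHermitian.eigenvalues i := by
    rw [det_eq_cast hA.isHermitian, Complex.ofReal_re]
  have hdetAre : A.det = ((A.det.re : ℝ) : ℂ) := by
    rw [det_eq_cast hA.isHermitian]
    rw [Complex.ofReal_re]
  have hApos : 0 < A.det.re := by
    rw [hre]; exact Finset.prod_pos fun i _ => hA.eigenvalues_pos i
  set PA := A.det.re with hPA
  set μ := hMps.isHermitian.eigenvalues with hμ
  have hμ0 : ∀ i, 0 ≤ μ i := fun i => hMps.eigenvalues_nonneg i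
  have hBre : B.det.re = PA * ∏ i, μ i := by
    rw [hdetB, mul_comm, Complex.re_ofReal_mul, mul_comm, hPA]
  have hmixre : ((a : ℂ) • A + (b : ℂ) • B).det.re = PA * ∏ i, (a + b * μ i) := by
    rw [hdetmix, mul_comm, Complex.re_ofReal_mul, mul_comm, hPA]
  rw [hBre, hmixre]
  have hprodμ : (0:ℝ) ≤ ∏ i, μ i := Finset.prod_nonneg fun i _ => hμ0 i
  calc PA ^ a * (PA * ∏ i, μ i) ^ b
      = PA ^ a * (PA ^ b * (∏ i, μ i) ^ b) := by
        rw [Real.mul_rpow hApos.le hprodμ]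
    _ = PA * (∏ i, μ i) ^ b := by
        rw [← mul_assoc, ← Real.rpow_add hApos, hab, Real.rpow_one]
    _ = PA * ∏ i, (μ i) ^ b := by
        rw [Real.finset_prod_rpow _ _ (fun i _ => hμ0 i)]
    _ ≤ PA * ∏ i, (a + b * μ i) := by
        refine mul_le_mul_of_nonneg_left ?_ hApos.le
        refine Finset.prod_le_prod (fun i _ => Real.rpow_nonneg (hμ0 i) b) fun i _ => ?_
        have := Real.geom_mean_le_arith_mean2_weighted ha hb zero_le_one (hμ0 i) hab
        simpa using this

lemma posDef_det_re_pos {k : Type*} [Fintype k] [DecidableEq k] {A : Matrix k k ℂ}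
    (hA : A.PosDef) : 0 < A.det.re := by
  rw [det_eq_cast hA.isHermitian, Complex.ofReal_re]
  exact Finset.prod_pos fun i _ => hA.eigenvalues_pos i

lemma trace_re_nonneg {k : Type*} [Fintype k] [DecidableEq k] {Q : Matrix k k ℂ}
    (hQ : Q.PosSemidef) : 0 ≤ Q.trace.re := by
  rw [trace_hermitian hQ.isHermitian, Complex.ofReal_re]
  exact Finset.sum_nonneg fun i _ => hQ.eigenvalues_nonneg i

lemma posSemidef_real_smul {k : Type*} [Fintype k] {Q : Matrix k k ℂ}
    (hQ : Q.PosSemidef) {t : ℝ} (ht : 0 ≤ t) : ((t : ℂ) • Q).PosSemidef := by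
  constructor
  · have h1 : Qᴴ = Q := hQ.isHermitian
    show ((t : ℂ) • Q)ᴴ = (t : ℂ) • Q
    rw [Matrix.conjTranspose_smul, h1, Complex.star_def, Complex.conj_ofReal]
  · exact (hQ.smul (a := (t : ℂ)) (Complex.zero_le_real.mpr ht)).2

variable {m n : ℕ}

/-- The feasible-power set defining `Pmin`. -/
def feas (H : Matrix (Fin m) (Fin n) ℂ) (W R : ℝ) : Set ℝ :=
  { P : ℝ | ∃ Q : Matrix (Fin n) (Fin n) ℂ, Q.PosSemidef ∧
    R ≤ W * Real.logb 2 (((1 : Matrix (Fin m) (Fin m) ℂ) + H * Q * Hᴴ).det.re) ∧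
    P = (Matrix.trace Q).re }

lemma posDef_one_add (H : Matrix (Fin m) (Fin n) ℂ) {Q : Matrix (Fin n) (Fin n) ℂ}
    (hQ : Q.PosSemidef) : ((1 : Matrix (Fin m) (Fin m) ℂ) + H * Q * Hᴴ).PosDef :=
  Matrix.PosDef.add_posSemidef Matrix.PosDef.one (hQ.mul_mul_conjTranspose_same H)

lemma feas_nonneg {H : Matrix (Fin m) (Fin n) ℂ} {W R : ℝ} {P : ℝ} (hP : P ∈ feas H W R) :
    0 ≤ P := by
  obtain ⟨Q, hQ, -, rfl⟩ := hP
  exact trace_re_nonneg hQ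

lemma feas_bddBelow (H : Matrix (Fin m) (Fin n) ℂ) (W R : ℝ) : BddBelow (feas H W R) :=
  ⟨0, fun P hP => feas_nonneg hP⟩

lemma zero_mem_feas (H : Matrix (Fin m) (Fin n) ℂ) (W : ℝ) {R : ℝ} (hR : R ≤ 0) :
    (0 : ℝ) ∈ feas H W R := by
  refine ⟨0, Matrix.PosSemidef.zero, ?_, by simp⟩
  simpa [Matrix.mul_zero, Matrix.zero_mul] using hR

lemma mix_mem_feas {H : Matrix (Fin m) (Fin n) ℂ} {W : ℝ} (hW : 0 < W)
    {R1 R2 P1 P2 a b : ℝ} (ha : 0 ≤ a) (hb : 0 ≤ b) (hab : a + b = 1)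
    (h1 : P1 ∈ feas H W R1) (h2 : P2 ∈ feas H W R2) :
    a * P1 + b * P2 ∈ feas H W (a * R1 + b * R2) := by
  obtain ⟨Q1, hQ1, hr1, rfl⟩ := h1
  obtain ⟨Q2, hQ2, hr2, rfl⟩ := h2
  set A : Matrix (Fin m) (Fin m) ℂ := 1 + H * Q1 * Hᴴ with hAdef
  set B : Matrix (Fin m) (Fin m) ℂ := 1 + H * Q2 * Hᴴ with hBdef
  have hA : A.PosDef := posDef_one_add H hQ1
  have hB : B.PosDef := posDef_one_add H hQ2
  set Q : Matrix (Fin n) (Fin n) ℂ := (a : ℂ) • Q1 + (b : ℂ) • Q2 with hQdef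
  have hQ : Q.PosSemidef := (posSemidef_real_smul hQ1 ha).add (posSemidef_real_smul hQ2 hb)
  have hab' : (a : ℂ) + (b : ℂ) = 1 := by exact_mod_cast congrArg (fun x : ℝ => (x : ℂ)) hab
  have hmix : (1 : Matrix (Fin m) (Fin m) ℂ) + H * Q * Hᴴ = (a : ℂ) • A + (b : ℂ) • B := by
    rw [hAdef, hBdef, smul_add, smul_add]
    have h1' : (a : ℂ) • (1 : Matrix (Fin m) (Fin m) ℂ) + (a : ℂ) • (H * Q1 * Hᴴ) +
        ((b : ℂ) • (1 : Matrix (Fin m) (Fin m) ℂ) + (b : ℂ) • (H * Q2 * Hᴴ))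
        = ((a : ℂ) • (1 : Matrix (Fin m) (Fin m) ℂ) + (b : ℂ) • 1) +
          ((a : ℂ) • (H * Q1 * Hᴴ) + (b : ℂ) • (H * Q2 * Hᴴ)) := by abel
    rw [h1', ← add_smul, hab', one_smul]
    congr 1
    rw [hQdef, Matrix.mul_add, Matrix.add_mul, Matrix.mul_smul, Matrix.smul_mul,
      Matrix.mul_smul, Matrix.smul_mul]
  have hrate : a * R1 + b * R2
      ≤ W * Real.logb 2 (((1 : Matrix (Fin m) (Fin m) ℂ) + H * Q * Hᴴ).det.re) := by
    have hAre : 0 < A.det.re := posDef_det_re_pos hA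
    have hBre : 0 < B.det.re := posDef_det_re_pos hB
    have hconc := logdet_concave hA hB ha hb hab
    have hlb : 0 < A.det.re ^ a * B.det.re ^ b :=
      mul_pos (Real.rpow_pos_of_pos hAre a) (Real.rpow_pos_of_pos hBre b)
    have hlog : Real.logb 2 (A.det.re ^ a * B.det.re ^ b)
        ≤ Real.logb 2 (((a : ℂ) • A + (b : ℂ) • B).det.re) :=
      Real.logb_le_logb_of_le one_lt_two hlb hconc
    have hlogeq : Real.logb 2 (A.det.re ^ a * B.det.re ^ b)
        = a * Real.logb 2 A.det.re + b * Real.logb 2 B.det.re := by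
      rw [Real.logb_mul (Real.rpow_pos_of_pos hAre a).ne' (Real.rpow_pos_of_pos hBre b).ne',
        Real.logb_rpow_eq_mul_logb_of_pos hAre, Real.logb_rpow_eq_mul_logb_of_pos hBre]
    rw [hmix]
    calc a * R1 + b * R2
        ≤ a * (W * Real.logb 2 A.det.re) + b * (W * Real.logb 2 B.det.re) :=
          add_le_add (mul_le_mul_of_nonneg_left hr1 ha) (mul_le_mul_of_nonneg_left hr2 hb)
      _ = W * (a * Real.logb 2 A.det.re + b * Real.logb 2 B.det.re) := by ring
      _ = W * Real.logb 2 (A.det.re ^ a * B.det.re ^ b) := by rw [hlogeq]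
      _ ≤ W * Real.logb 2 (((a : ℂ) • A + (b : ℂ) • B).det.re) :=
          mul_le_mul_of_nonneg_left (by simpa [hlogeq] using hlog) hW.le
  refine ⟨Q, hQ, hrate, ?_⟩
  rw [hQdef, Matrix.trace_add, Matrix.trace_smul, Matrix.trace_smul]
  simp [smul_eq_mul, Complex.add_re, Complex.re_ofReal_mul]

lemma feas_nonempty {H : Matrix (Fin m) (Fin n) ℂ} (hH : H ≠ 0) {W : ℝ} (hW : 0 < W) (R : ℝ) :
    (feas H W R).Nonempty := by
  have hex : ∃ i j, H i j ≠ 0 := by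
    by_contra h
    push_neg at h
    exact hH (by ext i j; simpa using h i j)
  obtain ⟨i0, j0, hij⟩ := hex
  set c : ℝ := ∑ i, Complex.normSq (H i j0) with hcdef
  have hc : 0 < c :=
    Finset.sum_pos' (fun i _ => Complex.normSq_nonneg _)
      ⟨i0, Finset.mem_univ _, Complex.normSq_pos.mpr hij⟩
  set t : ℝ := max 0 ((2 ^ (R / W) - 1) / c) with htdef
  have ht : 0 ≤ t := le_max_left _ _
  set A0 : Matrix (Fin n) (Fin 1) ℂ := fun p _ => if p = j0 then (Real.sqrt t : ℂ) else 0
    with hA0def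
  set Q : Matrix (Fin n) (Fin n) ℂ := A0 * A0ᴴ with hQdef
  have hQ : Q.PosSemidef := Matrix.posSemidef_self_mul_conjTranspose A0
  have htr : Q.trace.re = t := by
    rw [hQdef, trace_mul_conjTranspose_re]
    rw [Finset.sum_comm]
    simp [hA0def, apply_ite Complex.normSq, Real.sq_sqrt ht, Complex.normSq_ofReal,
      Real.mul_self_sqrt ht]
  -- compute the determinant
  set B0 : Matrix (Fin m) (Fin 1) ℂ := H * A0 with hB0def
  have hform : (1 : Matrix (Fin m) (Fin m) ℂ) + H * Q * Hᴴ = 1 + B0 * B0ᴴ := by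
    rw [hQdef, hB0def, Matrix.conjTranspose_mul, ← Matrix.mul_assoc, Matrix.mul_assoc (H * A0)]
  have hB0 : ∀ i, B0 i 0 = (Real.sqrt t : ℂ) * H i j0 := by
    intro i
    rw [hB0def, Matrix.mul_apply]
    simp [hA0def, mul_comm]
  have hdet : ((1 : Matrix (Fin m) (Fin m) ℂ) + H * Q * Hᴴ).det.re = 1 + t * c := by
    rw [hform, Matrix.det_one_add_mul_comm]
    have : ((1 : Matrix (Fin 1) (Fin 1) ℂ) + B0ᴴ * B0).det = 1 + ∑ i, star (B0 i 0) * B0 i 0 := by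
      rw [Matrix.det_fin_one]
      simp [Matrix.mul_apply, Matrix.one_apply]
    rw [this]
    have : ∑ i, star (B0 i 0) * B0 i 0 = ((∑ i, Complex.normSq (B0 i 0) : ℝ) : ℂ) := by
      push_cast
      refine Finset.sum_congr rfl fun i _ => ?_
      rw [Complex.star_def, ← Complex.normSq_eq_conj_mul_self]
    rw [this]
    have hsum : ∑ i, Complex.normSq (B0 i 0) = t * c := by
      rw [hcdef, Finset.mul_sum]
      refine Finset.sum_congr rfl fun i _ => ?_
      rw [hB0 i, Complex.normSq_mul, Complex.normSq_ofReal, Real.mul_self_sqrt ht]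
    rw [hsum]
    simp
  refine ⟨t, ⟨Q, hQ, ?_, htr.symm⟩⟩
  rw [hdet]
  have h1tc : (2 : ℝ) ^ (R / W) ≤ 1 + t * c := by
    have h2 : (2 ^ (R / W) - 1) / c ≤ t := le_max_right _ _
    have := (div_le_iff₀ hc).mp h2
    linarith
  have hpos : (0 : ℝ) < 1 + t * c := by
    have : (0:ℝ) < 2 ^ (R / W) := Real.rpow_pos_of_pos two_pos _
    linarith
  have hlogb : R / W ≤ Real.logb 2 (1 + t * c) :=
    (Real.le_logb_iff_rpow_le one_lt_two hpos).mpr h1tc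
  calc R = W * (R / W) := by field_simp
    _ ≤ W * Real.logb 2 (1 + t * c) := mul_le_mul_of_nonneg_left hlogb hW.le

lemma feas_lower_bound {H : Matrix (Fin m) (Fin n) ℂ} (hH : H ≠ 0) {W : ℝ} (hW : 0 < W)
    {R : ℝ} (hR : 0 < R) :
    ∃ δ : ℝ, 0 < δ ∧ ∀ P ∈ feas H W R, δ ≤ P := by
  have hm : 0 < m := by
    rcases Nat.eq_zero_or_pos m with h | h
    · exact absurd (by subst h; ext i j; exact i.elim0) hH
    · exact h
  set C : ℝ := ∑ i, ∑ j, Complex.normSq (H i j) with hCdef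
  have hC : 0 < C := by
    have hex : ∃ i j, H i j ≠ 0 := by
      by_contra h
      push_neg at h
      exact hH (by ext i j; simpa using h i j)
    obtain ⟨i0, j0, hij⟩ := hex
    refine Finset.sum_pos' (fun i _ => Finset.sum_nonneg fun j _ => Complex.normSq_nonneg _)
      ⟨i0, Finset.mem_univ _, ?_⟩
    exact Finset.sum_pos' (fun j _ => Complex.normSq_nonneg _)
      ⟨j0, Finset.mem_univ _, Complex.normSq_pos.mpr hij⟩
  set e : ℝ := R / (W * m) with hedef
  have he : 0 < e := div_pos hR (mul_pos hW (by exact_mod_cast hm))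
  refine ⟨((2:ℝ) ^ e - 1) / C, div_pos (by
    have : (1:ℝ) < 2 ^ e := by
      rw [show (1:ℝ) = (2:ℝ) ^ (0:ℝ) by simp]
      exact Real.rpow_lt_rpow_of_exponent_lt one_lt_two he
    linarith) hC, ?_⟩
  rintro P ⟨Q, hQ, hrate, rfl⟩
  set t : ℝ := Q.trace.re with htdef
  have ht : 0 ≤ t := trace_re_nonneg hQ
  set M : Matrix (Fin m) (Fin m) ℂ := H * Q * Hᴴ with hMdef
  have hM : M.PosSemidef := hQ.mul_mul_conjTranspose_same H
  -- trace bound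
  have htrM : M.trace.re ≤ C * t := by
    set S := CFC.sqrt Q with hSdef
    have hS : S.PosSemidef := (CFC.sqrt_nonneg Q).posSemidef
    have hSH : Sᴴ = S := hS.isHermitian
    have hSS : S * S = Q := CFC.sqrt_mul_sqrt_self Q hQ.nonneg
    have hMform : M = (H * S) * (H * S)ᴴ := by
      rw [hMdef, Matrix.conjTranspose_mul, hSH, ← hSS, ← Matrix.mul_assoc H S S,
        Matrix.mul_assoc (H * S) S Hᴴ]
    have htQ : t = ∑ q, ∑ p, Complex.normSq (S p q) := by
      have : Q.trace.re = (Matrix.trace (S * Sᴴ)).re := by rw [hSH, hSS]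
      rw [htdef, this, trace_mul_conjTranspose_re, Finset.sum_comm]
    rw [hMform, trace_mul_conjTranspose_re]
    calc ∑ i, ∑ j, Complex.normSq ((H * S) i j)
        ≤ ∑ i, ∑ j, (∑ p, Complex.normSq (H i p)) * (∑ p, Complex.normSq (S p j)) := by
          refine Finset.sum_le_sum fun i _ => Finset.sum_le_sum fun j _ => ?_
          rw [Matrix.mul_apply]
          exact normSq_sum_mul_le _ _
      _ = (∑ i, ∑ p, Complex.normSq (H i p)) * (∑ j, ∑ p, Complex.normSq (S p j)) := by
          rw [Finset.sum_mul_sum]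
      _ = C * t := by rw [hCdef, htQ]
  -- determinant bound
  have hdetle : ((1 : Matrix (Fin m) (Fin m) ℂ) + M).det.re ≤ (1 + C * t) ^ m := by
    have h11 := det_real_combo hM.isHermitian 1 1
    have hdet1 : ((1 : Matrix (Fin m) (Fin m) ℂ) + M).det.re
        = ∏ i, (1 + hM.isHermitian.eigenvalues i) := by
      rw [show ((1:ℝ):ℂ) = 1 from by norm_num, one_smul, one_smul] at h11
      rw [h11, Complex.ofReal_re]
      exact Finset.prod_congr rfl fun i _ => by ring
    have hμ0 : ∀ i, 0 ≤ hM.isHermitian.eigenvalues i := fun i => hM.eigenvalues_nonneg i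
    have hsumμ : ∑ i, hM.isHermitian.eigenvalues i = M.trace.re := by
      rw [trace_hermitian hM.isHermitian, Complex.ofReal_re]
    rw [hdet1]
    calc ∏ i, (1 + hM.isHermitian.eigenvalues i)
        ≤ ∏ _i : Fin m, (1 + C * t) := by
          refine Finset.prod_le_prod (fun i _ => by linarith [hμ0 i]) fun i _ => ?_
          have hle : hM.isHermitian.eigenvalues i ≤ ∑ j, hM.isHermitian.eigenvalues j :=
            Finset.single_le_sum (fun j _ => hμ0 j) (Finset.mem_univ i)
          have := hsumμ ▸ hle
          linarith [htrM]
      _ = (1 + C * t) ^ m := by rw [Finset.prod_const, Finset.card_univ, Fintype.card_fin]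
  -- conclude
  have hdetpos : 0 < ((1 : Matrix (Fin m) (Fin m) ℂ) + M).det.re :=
    posDef_det_re_pos (posDef_one_add H hQ)
  have h1Ct : (0:ℝ) < 1 + C * t := by nlinarith
  have hrate' : R ≤ W * (m * Real.logb 2 (1 + C * t)) := by
    calc R ≤ W * Real.logb 2 (((1 : Matrix (Fin m) (Fin m) ℂ) + M).det.re) := hrate
      _ ≤ W * Real.logb 2 ((1 + C * t) ^ m) :=
          mul_le_mul_of_nonneg_left
            (Real.logb_le_logb_of_le one_lt_two hdetpos hdetle) hW.le
      _ = W * (m * Real.logb 2 (1 + C * t)) := by rw [Real.logb_pow]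
  have hlogb : e ≤ Real.logb 2 (1 + C * t) := by
    rw [hedef, div_le_iff₀ (mul_pos hW (by exact_mod_cast hm))]
    calc R ≤ W * (m * Real.logb 2 (1 + C * t)) := hrate'
      _ = Real.logb 2 (1 + C * t) * (W * m) := by ring
  have h2e : (2:ℝ) ^ e ≤ 1 + C * t :=
    (Real.le_logb_iff_rpow_le one_lt_two h1Ct).mp hlogb
  rw [div_le_iff₀ hC]
  calc (2:ℝ) ^ e - 1 ≤ C * t := by linarith
    _ = t * C := mul_comm _ _

end PminAux

/-- For a nonzero channel, the minimum radiated power needed to sustain a rate satisfies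
`P_min(0) = 0`, is convex on `[0,∞)`, and is strictly increasing on `[0,∞)`. -/
theorem Pmin_zero_convex_strictMono (m n : ℕ) (H : Matrix (Fin m) (Fin n) ℂ)
    (hH : H ≠ 0) (W : ℝ) (hW : 0 < W) :
    Pmin H W 0 = 0 ∧ ConvexOn ℝ (Set.Ici (0 : ℝ)) (Pmin H W) ∧
      StrictMonoOn (Pmin H W) (Set.Ici (0 : ℝ)) := by
  have hPmin : ∀ R, Pmin H W R = sInf (PminAux.feas H W R) := fun R => rfl
  have hne : ∀ R : ℝ, (PminAux.feas H W R).Nonempty := fun R => PminAux.feas_nonempty hH hW R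
  have hbdd : ∀ R : ℝ, BddBelow (PminAux.feas H W R) := fun R => PminAux.feas_bddBelow H W R
  have hnonneg : ∀ R, 0 ≤ Pmin H W R := fun R => by
    rw [hPmin]
    exact le_csInf (hne R) fun P hP => PminAux.feas_nonneg hP
  have h0 : Pmin H W 0 = 0 := by
    refine le_antisymm ?_ (hnonneg 0)
    rw [hPmin]
    exact csInf_le (hbdd 0) (PminAux.zero_mem_feas H W le_rfl)
  refine ⟨h0, ⟨convex_Ici 0, ?_⟩, ?_⟩
  · -- convexity inequality
    intro R1 _ R2 _ a b ha hb hab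
    simp only [smul_eq_mul]
    refine le_of_forall_pos_le_add ?_
    intro ε hε
    obtain ⟨P1, hP1, hlt1⟩ := exists_lt_of_csInf_lt (hne R1)
      (lt_add_of_pos_right (sInf (PminAux.feas H W R1)) (by linarith : (0:ℝ) < ε/2))
    obtain ⟨P2, hP2, hlt2⟩ := exists_lt_of_csInf_lt (hne R2)
      (lt_add_of_pos_right (sInf (PminAux.feas H W R2)) (by linarith : (0:ℝ) < ε/2))
    have hmem := PminAux.mix_mem_feas hW ha hb hab hP1 hP2
    have hle : Pmin H W (a * R1 + b * R2) ≤ a * P1 + b * P2 := by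
      rw [hPmin]; exact csInf_le (hbdd _) hmem
    have h1 : a * P1 ≤ a * (Pmin H W R1 + ε/2) :=
      mul_le_mul_of_nonneg_left (by rw [hPmin]; exact hlt1.le) ha
    have h2 : b * P2 ≤ b * (Pmin H W R2 + ε/2) :=
      mul_le_mul_of_nonneg_left (by rw [hPmin]; exact hlt2.le) hb
    have hexp : a * (Pmin H W R1 + ε/2) + b * (Pmin H W R2 + ε/2)
        = a * Pmin H W R1 + b * Pmin H W R2 + (a + b) * (ε/2) := by ring
    rw [hab, one_mul] at hexp
    linarith
  · -- strict monotonicity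
    intro x hx y _ hxy
    have hy0 : 0 < y := lt_of_le_of_lt hx hxy
    obtain ⟨δ, hδ, hlb⟩ := PminAux.feas_lower_bound hH hW hy0
    have hPy : δ ≤ Pmin H W y := by rw [hPmin]; exact le_csInf (hne y) hlb
    have hPypos : 0 < Pmin H W y := lt_of_lt_of_le hδ hPy
    rcases eq_or_lt_of_le (Set.mem_Ici.mp hx) with hx0 | hxpos
    · rw [← hx0, h0]
      exact hPypos
    · set θ := x / y with hθdef
      have hθ0 : 0 < θ := div_pos hxpos hy0
      have hθ1 : θ < 1 := (div_lt_one hy0).mpr hxy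
      have key : ∀ P ∈ PminAux.feas H W y, Pmin H W x ≤ θ * P := by
        intro P hP
        have h0mem : (0:ℝ) ∈ PminAux.feas H W 0 := PminAux.zero_mem_feas H W le_rfl
        have hmem := PminAux.mix_mem_feas hW hθ0.le (by linarith : (0:ℝ) ≤ 1 - θ)
          (by ring) hP h0mem
        have hx' : θ * y + (1 - θ) * 0 = x := by
          rw [hθdef]; field_simp; ring
        have hP' : θ * P + (1 - θ) * 0 = θ * P := by ring
        rw [hx', hP'] at hmem
        rw [hPmin]
        exact csInf_le (hbdd x) hmem
      have hle : Pmin H W x ≤ θ * Pmin H W y := by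
        have hlower : ∀ P ∈ PminAux.feas H W y, Pmin H W x / θ ≤ P := fun P hP =>
          (div_le_iff₀ hθ0).mpr (by rw [mul_comm]; exact key P hP)
        have h := le_csInf (hne y) hlower
        rw [← hPmin] at h
        have := (div_le_iff₀ hθ0).mp h
        linarith [this]
      calc Pmin H W x ≤ θ * Pmin H W y := hle
        _ < 1 * Pmin H W y := by
            exact mul_lt_mul_of_pos_right hθ1 hPypos
        _ = Pmin H W y := one_mul _
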